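/- Every complex K in the class T_n admits a simplicial map to the n-simplex Δⁿ that is injective on each simplex of K, and this map is unique up to composing with a permutation of the vertices of Δⁿ when K contains at least one n-simplex glued to another along an (n−1)-face. -/

import Mathlib

/-- `IsTn n S` : the finset `S` of `n`-simplices (each a finset of `n+1` vertices)
forms a complex in the class `𝒯ₙ`: the smallest class of `n`-dimensional complexes
containing the `n`-simplex and closed under gluing two members along an
`(n-1)`-simplex.  Equivalently, the complex is built by starting from one
`n`-simplex and repeatedly gluing a fresh `n`-simplex along an `(n-1)`-face of
the complex built so far (the opposite vertex being new). -/
inductive IsTn {V : Type} [DecidableEq V] (n : ℕ) : Finset (Finset V) → Prop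
  | single (s : Finset V) (h : s.card = n + 1) : IsTn n {s}
  | glue (S : Finset (Finset V)) (s f : Finset V) (v : V) :
      IsTn n S → s ∈ S → f ⊆ s → f.card = n → (∀ t ∈ S, v ∉ t) →
      IsTn n (insert (insert v f) S)

/-- The 1-skeleton of the complex with set of maximal simplices `S`. -/
def skeleton {V : Type} [DecidableEq V] (S : Finset (Finset V)) : SimpleGraph V where
  Adj v w := v ≠ w ∧ ∃ s ∈ S, v ∈ s ∧ w ∈ s
  symm := by
    constructor
    rintro v w ⟨h, s, hs, hv, hw⟩
    exact ⟨Ne.symm h, s, hs, hw, hv⟩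
  loopless := by constructor; rintro v ⟨h, -⟩; exact h rfl

/-- `f` is (the spine of) a piece of the complex `S`: an `(n-1)`-simplex which is a
face of at least two `n`-simplices. -/
def IsPiece {V : Type} [DecidableEq V] (S : Finset (Finset V)) (n : ℕ) (f : Finset V) : Prop :=
  f.card = n ∧ 2 ≤ (S.filter (fun s => f ⊆ s)).card

instance {V : Type} [DecidableEq V] (S : Finset (Finset V)) (n : ℕ) :
    DecidablePred (IsPiece S n) := fun f =>
  decidable_of_iff (f.card = n ∧ 2 ≤ (S.filter (fun s => f ⊆ s)).card) Iff.rfl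


open Finset in
lemma IsTn.exists_labeling {V : Type} [DecidableEq V] {n : ℕ} {S : Finset (Finset V)}
    (hS : IsTn n S) : ∃ ℓ : V → Fin (n + 1), ∀ s ∈ S, Set.InjOn ℓ ↑s := by
  classical
  induction hS with
  | single s hcard =>
      refine ⟨fun w => if hw : w ∈ s then (finCongr hcard) (s.equivFin ⟨w, hw⟩) else 0, ?_⟩
      intro t ht
      rw [Finset.mem_singleton] at ht; subst ht
      intro a ha b hb hab
      rw [Finset.mem_coe] at ha hb
      dsimp only at hab
      rw [dif_pos ha, dif_pos hb] at hab
      have := (Finset.equivFin _).injective ((finCongr hcard).injective hab)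
      exact congrArg Subtype.val this
  | glue S s₀ f v hS hs hfs hf hv ih =>
      obtain ⟨ℓ, hℓ⟩ := ih
      have hvf : v ∉ f := fun h => hv s₀ hs (hfs h)
      have hinjf : Set.InjOn ℓ ↑f := (hℓ s₀ hs).mono (by exact_mod_cast hfs)
      have hcardimg : (f.image ℓ).card = n := by
        rw [Finset.card_image_of_injOn hinjf, hf]
      have hne : ((Finset.univ : Finset (Fin (n+1))) \ f.image ℓ).Nonempty := by
        rw [← Finset.card_pos, Finset.card_sdiff_of_subset (Finset.subset_univ _), Finset.card_univ,
          Fintype.card_fin, hcardimg]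
        omega
      obtain ⟨c, hc⟩ := hne
      rw [Finset.mem_sdiff] at hc
      refine ⟨fun w => if w = v then c else ℓ w, ?_⟩
      intro t ht
      rw [Finset.mem_insert] at ht
      have hnotc : ∀ w ∈ f, ℓ w ≠ c := by
        intro w hw hwc
        exact hc.2 (Finset.mem_image.mpr ⟨w, hw, hwc⟩)
      rcases ht with rfl | ht
      · intro a ha b hb hab
        dsimp only at hab
        rw [Finset.coe_insert, Set.mem_insert_iff, Finset.mem_coe] at ha hb
        rcases ha with rfl | ha <;> rcases hb with rfl | hb
        · rfl
        · simp only [if_pos rfl, if_neg (fun h : b = a => hvf (h ▸ hb))] at hab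
          exact absurd hab.symm (hnotc b hb)
        · simp only [if_pos rfl, if_neg (fun h : a = b => hvf (h ▸ ha))] at hab
          exact absurd hab (hnotc a ha)
        · have ha' : a ≠ v := fun h => hvf (h ▸ ha)
          have hb' : b ≠ v := fun h => hvf (h ▸ hb)
          rw [if_neg ha', if_neg hb'] at hab
          exact hinjf (Finset.mem_coe.mpr ha) (Finset.mem_coe.mpr hb) hab
      · intro a ha b hb hab
        dsimp only at hab
        rw [Finset.mem_coe] at ha hb
        have ha' : a ≠ v := fun h => hv t ht (h ▸ ha)
        have hb' : b ≠ v := fun h => hv t ht (h ▸ hb)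
        rw [if_neg ha', if_neg hb'] at hab
        exact hℓ t ht (Finset.mem_coe.mpr ha) (Finset.mem_coe.mpr hb) hab

open Finset in
lemma IsTn.unique_labeling {V : Type} [DecidableEq V] {n : ℕ} {S : Finset (Finset V)}
    (hS : IsTn n S) (ℓ ℓ' : V → Fin (n + 1))
    (h1 : ∀ s ∈ S, Set.InjOn ℓ ↑s) (h2 : ∀ s ∈ S, Set.InjOn ℓ' ↑s) :
    ∃ σ : Equiv.Perm (Fin (n + 1)), ∀ v ∈ S.biUnion id, ℓ' v = σ (ℓ v) := by
  classical
  revert h1 h2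
  induction hS with
  | single s hcard =>
      intro h1 h2
      have hℓ := h1 s (Finset.mem_singleton_self s)
      have hℓ' := h2 s (Finset.mem_singleton_self s)
      have himg : s.image ℓ = Finset.univ := by
        apply Finset.eq_univ_of_card
        rw [Finset.card_image_of_injOn hℓ, hcard, Fintype.card_fin]
      have hex : ∀ x : Fin (n+1), ∃ w, w ∈ s ∧ ℓ w = x := by
        intro x
        have hx : x ∈ s.image ℓ := himg ▸ Finset.mem_univ x
        exact Finset.mem_image.mp hx
      have ginj : Function.Injective (fun x => ℓ' (hex x).choose) := by
        intro x y hxy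
        obtain ⟨hx1, hx2⟩ := (hex x).choose_spec
        obtain ⟨hy1, hy2⟩ := (hex y).choose_spec
        have := hℓ' (Finset.mem_coe.mpr hx1) (Finset.mem_coe.mpr hy1) hxy
        rw [← hx2, ← hy2, this]
      refine ⟨Equiv.ofBijective _ (Finite.injective_iff_bijective.mp ginj), ?_⟩
      intro w hw
      rw [Finset.mem_biUnion] at hw
      obtain ⟨t, ht, hwt⟩ := hw
      rw [Finset.mem_singleton] at ht; subst ht
      simp only [id] at hwt
      show ℓ' w = ℓ' (hex (ℓ w)).choose
      obtain ⟨hc1, hc2⟩ := (hex (ℓ w)).choose_spec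
      have : (hex (ℓ w)).choose = w := hℓ (Finset.mem_coe.mpr hc1) (Finset.mem_coe.mpr hwt) hc2
      rw [this]
  | glue S s₀ f v hS hs hfs hf hv ih =>
      intro h1 h2
      set u := insert v f with hu_def
      have hu : u ∈ insert u S := Finset.mem_insert_self u S
      have hvf : v ∉ f := fun h => hv s₀ hs (hfs h)
      have h1S : ∀ t ∈ S, Set.InjOn ℓ ↑t := fun t ht => h1 t (Finset.mem_insert_of_mem ht)
      have h2S : ∀ t ∈ S, Set.InjOn ℓ' ↑t := fun t ht => h2 t (Finset.mem_insert_of_mem ht)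
      obtain ⟨σ, hσ⟩ := ih h1S h2S
      have hfb : ∀ w ∈ f, w ∈ S.biUnion id := by
        intro w hw
        exact Finset.mem_biUnion.mpr ⟨s₀, hs, hfs hw⟩
      have hℓu := h1 u hu
      have hℓ'u := h2 u hu
      have hvu : v ∈ u := Finset.mem_insert_self v f
      have hfu : f ⊆ u := Finset.subset_insert v f
      have hinjf' : Set.InjOn ℓ' ↑f := hℓ'u.mono (by exact_mod_cast hfu)
      have hA : ((Finset.univ : Finset (Fin (n+1))) \ f.image ℓ').card = 1 := by
        rw [Finset.card_sdiff_of_subset (Finset.subset_univ _), Finset.card_univ, Fintype.card_fin,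
          Finset.card_image_of_injOn hinjf', hf]
        omega
      obtain ⟨a, ha⟩ := Finset.card_eq_one.mp hA
      have hm1 : ℓ' v ∈ (Finset.univ : Finset (Fin (n+1))) \ f.image ℓ' := by
        rw [Finset.mem_sdiff]
        refine ⟨Finset.mem_univ _, ?_⟩
        intro hmem
        obtain ⟨w, hwf, hw⟩ := Finset.mem_image.mp hmem
        have : w = v := hℓ'u (Finset.mem_coe.mpr (hfu hwf)) (Finset.mem_coe.mpr hvu) hw
        exact hvf (this ▸ hwf)
      have hm2 : σ (ℓ v) ∈ (Finset.univ : Finset (Fin (n+1))) \ f.image ℓ' := by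
        rw [Finset.mem_sdiff]
        refine ⟨Finset.mem_univ _, ?_⟩
        intro hmem
        obtain ⟨w, hwf, hw⟩ := Finset.mem_image.mp hmem
        rw [hσ w (hfb w hwf)] at hw
        have hww : ℓ w = ℓ v := σ.injective hw
        have : w = v := hℓu (Finset.mem_coe.mpr (hfu hwf)) (Finset.mem_coe.mpr hvu) hww
        exact hvf (this ▸ hwf)
      rw [ha, Finset.mem_singleton] at hm1 hm2
      have key : ℓ' v = σ (ℓ v) := by rw [hm1, hm2]
      refine ⟨σ, ?_⟩
      intro w hw
      rw [Finset.mem_biUnion] at hw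
      obtain ⟨t, ht, hwt⟩ := hw
      simp only [id] at hwt
      rw [Finset.mem_insert] at ht
      rcases ht with rfl | ht
      · rw [Finset.mem_insert] at hwt
        rcases hwt with rfl | hwt
        · exact key
        · exact hσ w (hfb w hwt)
      · exact hσ w (Finset.mem_biUnion.mpr ⟨t, ht, hwt⟩)

/-- every complex `K ∈ 𝒯ₙ` admits a simplicial map to the `n`-simplex
(i.e. a labeling of its vertices by `{1, …, n+1}`) injective on each simplex,
and this map is unique up to a permutation of the vertices of `Δⁿ` (on the vertices
of the complex) when `K` contains two `n`-simplices glued along an `(n-1)`-face. -/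
theorem exists_unique_simplicial_map_to_simplex {V : Type} [DecidableEq V] {n : ℕ}
    {S : Finset (Finset V)} (hS : IsTn n S) :
    (∃ ℓ : V → Fin (n + 1), ∀ s ∈ S, Set.InjOn ℓ ↑s) ∧
    (∀ ℓ ℓ' : V → Fin (n + 1),
      (∀ s ∈ S, Set.InjOn ℓ ↑s) → (∀ s ∈ S, Set.InjOn ℓ' ↑s) →
      (∃ s ∈ S, ∃ t ∈ S, s ≠ t ∧ (s ∩ t).card = n) →
      ∃ σ : Equiv.Perm (Fin (n + 1)), ∀ v ∈ S.biUnion id, ℓ' v = σ (ℓ v)) := by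
  exact ⟨hS.exists_labeling, fun ℓ ℓ' h1 h2 _ => hS.unique_labeling ℓ ℓ' h1 h2⟩
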